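/- arXiv:math/0610456 — 7 statements merged into one kernel-verified Lean document; each statement's English description precedes it below -/
import Mathlib

section
/- For all positive integers n and m, r_{n+m} ≤ 1 + r_{max(n,m)}. -/
/-- `G(n)` can be represented by assigning to each vertex a set of at most `k`
colors (natural numbers) so that `x_i` and `y_j` share a color iff `i ≤ j`. -/
def HalfRep (n k : ℕ) : Prop :=
  ∃ X Y : Fin n → Finset ℕ,
    (∀ i, (X i).card ≤ k) ∧ (∀ j, (Y j).card ≤ k) ∧
    (∀ i j, (X i ∩ Y j).Nonempty ↔ i ≤ j)

/-- `r n` is the least `k` such that `G(n)` admits such a representation. -/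
noncomputable def r (n : ℕ) : ℕ := sInf {k | HalfRep n k}

lemma halfRep_self (n : ℕ) : HalfRep n n := by
  refine ⟨fun i => Finset.Ico i.val n, fun j => {j.val}, ?_, ?_, ?_⟩
  · intro i; rw [Nat.card_Ico]; omega
  · intro j; have := j.pos; simp; omega
  · intro i j
    constructor
    · rintro ⟨a, ha⟩
      simp only [Finset.mem_inter, Finset.mem_Ico, Finset.mem_singleton] at ha
      exact Fin.le_def.2 (by omega)
    · intro h
      exact ⟨j.val, by simp [Finset.mem_Ico, Fin.le_def.1 h, j.isLt]⟩

/-- For all positive integers `n, m`, `r (n+m) ≤ 1 + r (max n m)`. -/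
theorem r_add_le (n m : ℕ) (hn : 1 ≤ n) (hm : 1 ≤ m) :
    r (n + m) ≤ 1 + r (max n m) := by
  have hne : {k | HalfRep (max n m) k}.Nonempty := ⟨max n m, halfRep_self (max n m)⟩
  obtain ⟨X, Y, hX, hY, hXY⟩ : HalfRep (max n m) (r (max n m)) := Nat.sInf_mem hne
  have hnN : n ≤ max n m := le_max_left n m
  have hmN : m ≤ max n m := le_max_right n m
  rw [add_comm 1]
  refine Nat.sInf_le ?_
  refine ⟨fun i => if h : (i : ℕ) < n
      then ((X ⟨i, h.trans_le hnN⟩).image (fun a => 3*a)) ∪ {2}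
      else (X ⟨(i:ℕ) - n, by have := i.isLt; omega⟩).image (fun a => 3*a+1),
    fun j => if h : (j : ℕ) < n
      then (Y ⟨j, h.trans_le hnN⟩).image (fun a => 3*a)
      else ((Y ⟨(j:ℕ) - n, by have := j.isLt; omega⟩).image (fun a => 3*a+1)) ∪ {2},
    ?_, ?_, ?_⟩
  · intro i
    by_cases h : (i : ℕ) < n <;> simp only [h, dif_pos, dif_neg, not_false_iff]
    · exact (Finset.card_union_le _ _).trans (by
        simpa using Nat.add_le_add_right ((Finset.card_image_le).trans (hX _)) 1)
    · exact (Finset.card_image_le).trans ((hX _).trans (by omega))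
  · intro j
    by_cases h : (j : ℕ) < n <;> simp only [h, dif_pos, dif_neg, not_false_iff]
    · exact (Finset.card_image_le).trans ((hY _).trans (by omega))
    · exact (Finset.card_union_le _ _).trans (by
        simpa using Nat.add_le_add_right ((Finset.card_image_le).trans (hY _)) 1)
  · intro i j
    by_cases hi : (i : ℕ) < n <;> by_cases hj : (j : ℕ) < n <;>
      simp only [hi, hj, dif_pos, dif_neg, not_false_iff]
    · -- both in first block
      rw [Fin.le_def]
      constructor
      · rintro ⟨a, ha⟩
        simp only [Finset.mem_inter, Finset.mem_union, Finset.mem_singleton,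
          Finset.mem_image] at ha
        obtain ⟨h1, c, hc, rfl⟩ := ha
        rcases h1 with ⟨b, hb, hbc⟩ | h2
        · have : b = c := by omega
          subst this
          have := (hXY _ _).1 ⟨b, Finset.mem_inter.2 ⟨hb, hc⟩⟩
          exact Fin.le_def.1 this
        · omega
      · intro h
        have hle : (⟨(i:ℕ), hi.trans_le hnN⟩ : Fin (max n m)) ≤ ⟨(j:ℕ), hj.trans_le hnN⟩ :=
          Fin.le_def.2 h
        obtain ⟨a, ha⟩ := (hXY _ _).2 hle
        simp only [Finset.mem_inter] at ha
        exact ⟨3*a, Finset.mem_inter.2 ⟨Finset.mem_union_left _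
          (Finset.mem_image_of_mem _ ha.1), Finset.mem_image_of_mem _ ha.2⟩⟩
    · -- i in first block, j in second: always adjacent and i ≤ j
      have : (i : ℕ) ≤ (j : ℕ) := by omega
      simp only [Fin.le_def, this, iff_true]
      exact ⟨2, by simp⟩
    · -- i in second block, j in first: never adjacent
      have : ¬ ((i : ℕ) ≤ (j : ℕ)) := by omega
      simp only [Fin.le_def, this, iff_false]
      rintro ⟨a, ha⟩
      simp only [Finset.mem_inter, Finset.mem_image] at ha
      obtain ⟨⟨b, hb, rfl⟩, c, hc, hca⟩ := ha
      omega
    · -- both in second block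
      rw [Fin.le_def]
      constructor
      · rintro ⟨a, ha⟩
        simp only [Finset.mem_inter, Finset.mem_union, Finset.mem_singleton,
          Finset.mem_image] at ha
        obtain ⟨⟨b, hb, rfl⟩, h2⟩ := ha
        rcases h2 with ⟨c, hc, hcb⟩ | h2
        · have : c = b := by omega
          subst this
          have h3 := Fin.le_def.1 ((hXY _ _).1 ⟨c, Finset.mem_inter.2 ⟨hb, hc⟩⟩)
          simp only at h3
          omega
        · omega
      · intro h
        have hle : (⟨(i:ℕ) - n, by have := i.isLt; omega⟩ : Fin (max n m)) ≤
            ⟨(j:ℕ) - n, by have := j.isLt; omega⟩ := Fin.le_def.2 (by simp; omega)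
        obtain ⟨a, ha⟩ := (hXY _ _).2 hle
        simp only [Finset.mem_inter] at ha
        exact ⟨3*a+1, Finset.mem_inter.2 ⟨Finset.mem_image_of_mem _ ha.1,
          Finset.mem_union_left _ (Finset.mem_image_of_mem _ ha.2)⟩⟩
end

section
/- For every positive integer k, r_{(2k-1)!!} ≥ k, where (2k-1)!! = (2k-1)·(2k-3)···3·1. -/
theorem halfRep_mono {n k k' : ℕ} (h : HalfRep n k) (hkk : k ≤ k') : HalfRep n k' := by
  obtain ⟨X, Y, hX, hY, hXY⟩ := h
  exact ⟨X, Y, fun i => (hX i).trans hkk, fun j => (hY j).trans hkk, hXY⟩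

theorem halfRep_key (k n m : ℕ) (hk : 1 ≤ k) (hn : 1 ≤ n)
    (hm : m = (2 * k + 1) * n) (h : HalfRep m k) : HalfRep n (k - 1) := by
  classical
  obtain ⟨X, Y, hX, hY, hXY⟩ := h
  have hm1 : 1 ≤ m := by
    have : 1 * 1 ≤ (2 * k + 1) * n := Nat.mul_le_mul (by omega) hn
    omega
  have cross : ∀ (c : ℕ) (i j : Fin m), c ∈ X i → c ∈ Y j → (i : ℕ) ≤ (j : ℕ) := by
    intro c i j hci hcj
    exact (hXY i j).mp ⟨c, Finset.mem_inter.mpr ⟨hci, hcj⟩⟩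
  by_cases hA : ∀ t, t < 2 * k + 1 → ¬ (
      (∀ i : Fin m, t * n ≤ (i : ℕ) → (i : ℕ) < t * n + n →
        ∃ c ∈ X i, ∃ i' : Fin m, t * n + n ≤ (i' : ℕ) ∧ c ∈ X i') ∧
      (∀ j : Fin m, t * n ≤ (j : ℕ) → (j : ℕ) < t * n + n →
        ∃ c ∈ Y j, ∃ j' : Fin m, (j' : ℕ) < t * n ∧ c ∈ Y j'))
  · -- Case B : every block is bad; derive a contradiction.
    exfalso
    set SX : Finset ℕ := (Finset.range (2 * k + 1)).filter (fun t =>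
      ¬ (∀ i : Fin m, t * n ≤ (i : ℕ) → (i : ℕ) < t * n + n →
        ∃ c ∈ X i, ∃ i' : Fin m, t * n + n ≤ (i' : ℕ) ∧ c ∈ X i')) with hSXdef
    set SY : Finset ℕ := (Finset.range (2 * k + 1)).filter (fun t =>
      ¬ (∀ j : Fin m, t * n ≤ (j : ℕ) → (j : ℕ) < t * n + n →
        ∃ c ∈ Y j, ∃ j' : Fin m, (j' : ℕ) < t * n ∧ c ∈ Y j')) with hSYdef
    have hcover : Finset.range (2 * k + 1) ⊆ SX ∪ SY := by
      intro t ht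
      have ht' := Finset.mem_range.mp ht
      have := hA t ht'
      rw [not_and_or] at this
      rcases this with h1 | h1
      · exact Finset.mem_union_left _ (Finset.mem_filter.mpr ⟨ht, h1⟩)
      · exact Finset.mem_union_right _ (Finset.mem_filter.mpr ⟨ht, h1⟩)
    have hcard : 2 * k + 1 ≤ SX.card + SY.card := by
      calc 2 * k + 1 = (Finset.range (2 * k + 1)).card := by simp
        _ ≤ (SX ∪ SY).card := Finset.card_le_card hcover
        _ ≤ SX.card + SY.card := Finset.card_union_le _ _
    rcases (show k + 1 ≤ SX.card ∨ k + 1 ≤ SY.card by omega) with hbig | hbig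
    · -- many X-bad blocks
      have hSX : ∀ t ∈ SX, ∃ i : Fin m, t * n ≤ (i : ℕ) ∧ (i : ℕ) < t * n + n ∧
          ∀ c ∈ X i, ∀ i' : Fin m, c ∈ X i' → (i' : ℕ) < t * n + n := by
        intro t ht
        have := (Finset.mem_filter.mp ht).2
        push_neg at this
        obtain ⟨i, h1, h2, h3⟩ := this
        exact ⟨i, h1, h2, fun c hc i' hci' => by
          have := h3 c hc i'
          by_contra hcon
          exact (this (by omega)) hci'⟩
      choose iw hiw1 hiw2 hbad using hSX
      have hL : m - 1 < m := by omega
      have hcw : ∀ (t : ℕ) (ht : t ∈ SX), ∃ c,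
          c ∈ X (iw t ht) ∧ c ∈ Y ⟨m - 1, hL⟩ := by
        intro t ht
        obtain ⟨c, hc⟩ := (hXY (iw t ht) ⟨m - 1, hL⟩).mpr (by
          rw [Fin.le_def]
          have := (iw t ht).isLt
          simp only
          omega)
        exact ⟨c, Finset.mem_inter.mp hc⟩
      choose cw hcw1 hcw2 using hcw
      set f : ℕ → ℕ := fun t => if h : t ∈ SX then cw t h else 0 with hf
      have hmaps : ∀ t ∈ SX, f t ∈ Y ⟨m - 1, hL⟩ := by
        intro t ht
        simp only [hf, dif_pos ht]
        exact hcw2 t ht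
      have hlt : (Y ⟨m - 1, hL⟩).card < SX.card := lt_of_le_of_lt (hY _) (by omega)
      obtain ⟨x, hx, y, hy, hxy, hfeq⟩ :=
        Finset.exists_ne_map_eq_of_card_lt_of_maps_to hlt hmaps
      have key : ∀ a b, ∀ ha : a ∈ SX, ∀ hb : b ∈ SX, a < b → f a = f b → False := by
        intro a b ha hb hab hfab
        have hca : cw a ha ∈ X (iw a ha) := hcw1 a ha
        have hcb : cw b hb ∈ X (iw b hb) := hcw1 b hb
        have hcab : cw a ha = cw b hb := by
          simpa only [hf, dif_pos ha, dif_pos hb] using hfab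
        have hcon := hbad a ha (cw a ha) hca (iw b hb) (hcab ▸ hcb)
        have h1 := hiw1 b hb
        have h2 : (a + 1) * n ≤ b * n := Nat.mul_le_mul_right n (by omega)
        have h3 : (a + 1) * n = a * n + n := by ring
        omega
      rcases hxy.lt_or_gt with hlt' | hlt'
      · exact key x y hx hy hlt' hfeq
      · exact key y x hy hx hlt' hfeq.symm
    · -- many Y-bad blocks
      have hSY : ∀ t ∈ SY, ∃ j : Fin m, t * n ≤ (j : ℕ) ∧ (j : ℕ) < t * n + n ∧
          ∀ c ∈ Y j, ∀ j' : Fin m, c ∈ Y j' → t * n ≤ (j' : ℕ) := by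
        intro t ht
        have := (Finset.mem_filter.mp ht).2
        push_neg at this
        obtain ⟨j, h1, h2, h3⟩ := this
        exact ⟨j, h1, h2, fun c hc j' hcj' => by
          have := h3 c hc j'
          by_contra hcon
          exact (this (by omega)) hcj'⟩
      choose jw hjw1 hjw2 hbad using hSY
      have hZ : 0 < m := by omega
      have hcw : ∀ (t : ℕ) (ht : t ∈ SY), ∃ c,
          c ∈ X ⟨0, hZ⟩ ∧ c ∈ Y (jw t ht) := by
        intro t ht
        obtain ⟨c, hc⟩ := (hXY ⟨0, hZ⟩ (jw t ht)).mpr (by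
          rw [Fin.le_def]
          simp only
          omega)
        exact ⟨c, Finset.mem_inter.mp hc⟩
      choose cw hcw1 hcw2 using hcw
      set f : ℕ → ℕ := fun t => if h : t ∈ SY then cw t h else 0 with hf
      have hmaps : ∀ t ∈ SY, f t ∈ X ⟨0, hZ⟩ := by
        intro t ht
        simp only [hf, dif_pos ht]
        exact hcw1 t ht
      have hlt : (X ⟨0, hZ⟩).card < SY.card := lt_of_le_of_lt (hX _) (by omega)
      obtain ⟨x, hx, y, hy, hxy, hfeq⟩ :=
        Finset.exists_ne_map_eq_of_card_lt_of_maps_to hlt hmaps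
      have key : ∀ a b, ∀ ha : a ∈ SY, ∀ hb : b ∈ SY, a < b → f a = f b → False := by
        intro a b ha hb hab hfab
        have hca : cw a ha ∈ Y (jw a ha) := hcw2 a ha
        have hcb : cw b hb ∈ Y (jw b hb) := hcw2 b hb
        have hcab : cw a ha = cw b hb := by
          simpa only [hf, dif_pos ha, dif_pos hb] using hfab
        have hcon := hbad b hb (cw b hb) hcb (jw a ha) (hcab ▸ hca)
        have h1 := hjw2 a ha
        have h2 : (a + 1) * n ≤ b * n := Nat.mul_le_mul_right n (by omega)
        have h3 : (a + 1) * n = a * n + n := by ring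
        omega
      rcases hxy.lt_or_gt with hlt' | hlt'
      · exact key x y hx hy hlt' hfeq
      · exact key y x hy hx hlt' hfeq.symm
  · -- Case A : some good block exists; build the smaller representation.
    push_neg at hA
    obtain ⟨t, ht, hXg, hYg⟩ := hA
    have ham : t * n + n ≤ m := by
      have h2 : (t + 1) * n ≤ (2 * k + 1) * n := Nat.mul_le_mul_right n (by omega)
      have h3 : (t + 1) * n = t * n + n := by ring
      omega
    have emb : ∀ s : Fin n, t * n + (s : ℕ) < m := by
      intro s
      have := s.isLt
      omega
    refine ⟨fun s => (X ⟨t * n + s, emb s⟩).filter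
        (fun c => ∀ i' : Fin m, c ∈ X i' → (i' : ℕ) < t * n + n),
      fun s => (Y ⟨t * n + s, emb s⟩).filter
        (fun c => ∀ j' : Fin m, c ∈ Y j' → t * n ≤ (j' : ℕ)),
      ?_, ?_, ?_⟩
    · intro s
      obtain ⟨c0, hc0X, i', hi', hc0i'⟩ := hXg ⟨t * n + s, emb s⟩
        (by simp) (by simp)
      have hsub : (X ⟨t * n + s, emb s⟩).filter
          (fun c => ∀ i' : Fin m, c ∈ X i' → (i' : ℕ) < t * n + n) ⊆
          (X ⟨t * n + s, emb s⟩).erase c0 := by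
        intro c hc
        rw [Finset.mem_filter] at hc
        rw [Finset.mem_erase]
        refine ⟨?_, hc.1⟩
        rintro rfl
        exact absurd (hc.2 i' hc0i') (by omega)
      calc _ ≤ ((X ⟨t * n + s, emb s⟩).erase c0).card := Finset.card_le_card hsub
        _ = (X ⟨t * n + s, emb s⟩).card - 1 := Finset.card_erase_of_mem hc0X
        _ ≤ k - 1 := Nat.sub_le_sub_right (hX _) 1
    · intro s
      obtain ⟨c0, hc0Y, j', hj', hc0j'⟩ := hYg ⟨t * n + s, emb s⟩
        (by simp) (by simp)
      have hsub : (Y ⟨t * n + s, emb s⟩).filter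
          (fun c => ∀ j' : Fin m, c ∈ Y j' → t * n ≤ (j' : ℕ)) ⊆
          (Y ⟨t * n + s, emb s⟩).erase c0 := by
        intro c hc
        rw [Finset.mem_filter] at hc
        rw [Finset.mem_erase]
        refine ⟨?_, hc.1⟩
        rintro rfl
        exact absurd (hc.2 j' hc0j') (by omega)
      calc _ ≤ ((Y ⟨t * n + s, emb s⟩).erase c0).card := Finset.card_le_card hsub
        _ = (Y ⟨t * n + s, emb s⟩).card - 1 := Finset.card_erase_of_mem hc0Y
        _ ≤ k - 1 := Nat.sub_le_sub_right (hY _) 1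
    · intro s u
      constructor
      · rintro ⟨c, hc⟩
        rw [Finset.mem_inter, Finset.mem_filter, Finset.mem_filter] at hc
        have hcr := cross c _ _ hc.1.1 hc.2.1
        simp only at hcr
        rw [Fin.le_def]
        omega
      · intro hsu
        have hsu' : (s : ℕ) ≤ (u : ℕ) := hsu
        obtain ⟨c, hc⟩ := (hXY ⟨t * n + s, emb s⟩ ⟨t * n + u, emb u⟩).mpr (by
          rw [Fin.le_def]
          simp only
          omega)
        rw [Finset.mem_inter] at hc
        refine ⟨c, Finset.mem_inter.mpr ⟨Finset.mem_filter.mpr ⟨hc.1, ?_⟩,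
          Finset.mem_filter.mpr ⟨hc.2, ?_⟩⟩⟩
        · intro i' hci'
          have hcr := cross c i' ⟨t * n + u, emb u⟩ hci' hc.2
          have hu := u.isLt
          simp only at hcr
          omega
        · intro j' hcj'
          have hcr := cross c ⟨t * n + s, emb s⟩ j' hc.1 hcj'
          simp only at hcr
          omega

theorem halfRep_main (k : ℕ) (hk : 1 ≤ k) :
    ¬ HalfRep (∏ j ∈ Finset.range k, (2 * j + 1)) (k - 1) := by
  induction k, hk using Nat.le_induction with
  | base =>
    intro h
    obtain ⟨X, Y, hX, hY, hXY⟩ := h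
    have hpos : 0 < ∏ j ∈ Finset.range 1, (2 * j + 1) := by simp
    obtain ⟨c, hc⟩ := (hXY ⟨0, hpos⟩ ⟨0, hpos⟩).mpr le_rfl
    have h1 : (X ⟨0, hpos⟩).card = 0 := by have := hX ⟨0, hpos⟩; omega
    rw [Finset.card_eq_zero] at h1
    rw [Finset.mem_inter, h1] at hc
    exact absurd hc.1 (Finset.notMem_empty c)
  | succ k hk ih =>
    intro h
    apply ih
    refine halfRep_key k (∏ j ∈ Finset.range k, (2 * j + 1))
      (∏ j ∈ Finset.range (k + 1), (2 * j + 1)) hk ?_ ?_ ?_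
    · have : 0 < ∏ j ∈ Finset.range k, (2 * j + 1) :=
        Finset.prod_pos (fun j _ => Nat.succ_pos _)
      omega
    · rw [Finset.prod_range_succ]; ring
    · simpa using h

theorem halfRep_self_s7 (N : ℕ) : HalfRep N N := by
  refine ⟨fun i => {(i : ℕ)}, fun j => Finset.range ((j : ℕ) + 1), ?_, ?_, ?_⟩
  · intro i; simp only [Finset.card_singleton]; exact i.pos
  · intro j; simp only [Finset.card_range]; exact j.isLt
  · intro i j
    constructor
    · rintro ⟨c, hc⟩
      rw [Finset.mem_inter, Finset.mem_singleton, Finset.mem_range] at hc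
      obtain ⟨rfl, h2⟩ := hc
      exact Fin.le_def.mpr (by omega)
    · intro hij
      have := Fin.le_def.mp hij
      exact ⟨(i : ℕ), by
        rw [Finset.mem_inter, Finset.mem_singleton, Finset.mem_range]
        exact ⟨rfl, by omega⟩⟩

/-- For every positive integer `k`, `r ((2k-1)!!) ≥ k`, where
`(2k-1)!! = (2k-1)(2k-3)⋯3·1 = ∏_{j=0}^{k-1} (2j+1)`. -/
theorem r_doubleFactorial (k : ℕ) (hk : 1 ≤ k) :
    k ≤ r (∏ j ∈ Finset.range k, (2 * j + 1)) := by
  by_contra hcon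
  push_neg at hcon
  have hne : {k' | HalfRep (∏ j ∈ Finset.range k, (2 * j + 1)) k'}.Nonempty :=
    ⟨_, halfRep_self_s7 _⟩
  have hmem : HalfRep (∏ j ∈ Finset.range k, (2 * j + 1))
      (r (∏ j ∈ Finset.range k, (2 * j + 1))) := Nat.sInf_mem hne
  have hle : r (∏ j ∈ Finset.range k, (2 * j + 1)) ≤ k - 1 := by omega
  exact halfRep_main k hk (halfRep_mono hmem hle)
end

section
/- For each fixed k, for all sufficiently large n, the edges of G(n) cannot be covered by complete bipartite subgraphs in such a way that each vertex belongs to at most k of them. -/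
/-- An explicit bound: any representation with `X`-budget `k` and `Y`-budget `b`
has at most `Fbound k b` indices. -/
def Fbound (k : ℕ) : ℕ → ℕ
  | 0 => 0
  | b+1 => k * (Fbound k b + 1)

lemma key_lemma (k : ℕ) : ∀ b n (X Y : Fin n → Finset ℕ),
    (∀ i, (X i).card ≤ k) → (∀ j, (Y j).card ≤ b) →
    (∀ i j, (X i ∩ Y j).Nonempty ↔ i ≤ j) → n ≤ Fbound k b := by
  intro b
  induction b with
  | zero =>
    intro n X Y hX hY hiff
    by_contra h
    push_neg at h
    have hn : 0 < n := lt_of_le_of_lt (Nat.zero_le _) h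
    obtain ⟨d, hd⟩ := (hiff ⟨0, hn⟩ ⟨0, hn⟩).2 le_rfl
    have hdY : d ∈ Y ⟨0, hn⟩ := (Finset.mem_inter.1 hd).2
    have := hY ⟨0, hn⟩
    rw [Nat.le_zero, Finset.card_eq_zero] at this
    simp [this] at hdY
  | succ b ih =>
    intro n X Y hX hY hiff
    rcases Nat.eq_zero_or_pos n with hn | hn
    · simp [hn]
    set i0 : Fin n := ⟨0, hn⟩ with hi0
    -- X i0 is nonempty
    have hX0ne : (X i0).Nonempty := by
      obtain ⟨d, hd⟩ := (hiff i0 i0).2 le_rfl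
      exact ⟨d, (Finset.mem_inter.1 hd).1⟩
    -- B c = set of j with c ∈ Y j
    set B : ℕ → Finset (Fin n) := fun c => Finset.univ.filter (fun j => c ∈ Y j) with hB
    -- cover
    have hcover : (Finset.univ : Finset (Fin n)) ⊆ (X i0).biUnion B := by
      intro j _
      obtain ⟨d, hd⟩ := (hiff i0 j).2 (by exact Nat.zero_le _)
      rw [Finset.mem_inter] at hd
      exact Finset.mem_biUnion.2 ⟨d, hd.1, by simp [hB, hd.2]⟩
    -- pick c maximizing |B c|
    obtain ⟨c, hcX, hcmax⟩ := Finset.exists_max_image (X i0) (fun c => (B c).card) hX0ne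
    have hn_le : n ≤ k * (B c).card := by
      calc n = (Finset.univ : Finset (Fin n)).card := by simp
        _ ≤ ((X i0).biUnion B).card := Finset.card_le_card hcover
        _ ≤ ∑ c' ∈ X i0, (B c').card := Finset.card_biUnion_le
        _ ≤ (X i0).card * (B c).card := Finset.sum_le_card_nsmul _ _ _ (fun c' hc' => hcmax c' hc')
        _ ≤ k * (B c).card := Nat.mul_le_mul_right _ (hX i0)
    have hBne : (B c).Nonempty := by
      rcases (B c).eq_empty_or_nonempty with h | h
      · rw [h] at hn_le; simp at hn_le; omega
      · exact h
    set jm : Fin n := (B c).min' hBne with hjm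
    have hjm_mem : jm ∈ B c := (B c).min'_mem hBne
    have hcYjm : c ∈ Y jm := by simpa [hB] using hjm_mem
    set B' : Finset (Fin n) := (B c).erase jm with hB'
    have hcard' : B'.card = (B c).card - 1 := Finset.card_erase_of_mem hjm_mem
    set m : ℕ := B'.card with hm
    set e : Fin m ≃o {x // x ∈ B'} := B'.orderIsoOfFin rfl with he
    -- properties of elements of B'
    have hmemB' : ∀ i : Fin m, (e i : Fin n) ∈ B' := fun i => (e i).2
    have hcY : ∀ i : Fin m, c ∈ Y (e i) := fun i => by
      have := Finset.mem_of_mem_erase (hmemB' i)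
      simpa [hB] using this
    have hcnotX : ∀ i : Fin m, c ∉ X (e i) := by
      intro i hc
      have hne : (e i : Fin n) ≠ jm := Finset.ne_of_mem_erase (hmemB' i)
      have hle : (e i : Fin n) ≤ jm := (hiff _ _).1 ⟨c, Finset.mem_inter.2 ⟨hc, hcYjm⟩⟩
      have hge : jm ≤ (e i : Fin n) := (B c).min'_le _ (Finset.mem_of_mem_erase (hmemB' i))
      exact hne (le_antisymm hle hge)
    -- new instance
    have hmle : m ≤ Fbound k b := by
      apply ih m (fun i => X (e i)) (fun j => (Y (e j)).erase c)
      · intro i; exact hX _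
      · intro j
        have h1 := Finset.card_erase_of_mem (hcY j)
        have h2 := hY (e j)
        omega
      · intro i j
        constructor
        · intro ⟨d, hd⟩
          rw [Finset.mem_inter] at hd
          have hdY : d ∈ Y (e j) := Finset.mem_of_mem_erase hd.2
          have : (e i : Fin n) ≤ (e j : Fin n) :=
            (hiff _ _).1 ⟨d, Finset.mem_inter.2 ⟨hd.1, hdY⟩⟩
          exact e.le_iff_le.1 this
        · intro hij
          have : (e i : Fin n) ≤ (e j : Fin n) := e.le_iff_le.2 hij
          obtain ⟨d, hd⟩ := (hiff _ _).2 this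
          rw [Finset.mem_inter] at hd
          have hdc : d ≠ c := fun h => hcnotX i (h ▸ hd.1)
          exact ⟨d, Finset.mem_inter.2 ⟨hd.1, Finset.mem_erase.2 ⟨hdc, hd.2⟩⟩⟩
    calc n ≤ k * (B c).card := hn_le
      _ ≤ k * (m + 1) := Nat.mul_le_mul_left _ (by omega)
      _ ≤ k * (Fbound k b + 1) := Nat.mul_le_mul_left _ (by omega)
      _ = Fbound k (b+1) := rfl

/-- For each fixed `k`, for all sufficiently large `n`, the edges of `G(n)`
cannot be covered by complete bipartite subgraphs so that each vertex belongs
to at most `k` of them; equivalently, `G(n)` has no representation assigning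
at most `k` colors per vertex with `x_i, y_j` sharing a color iff `i ≤ j`. -/
theorem no_bounded_cover (k : ℕ) : ∃ N : ℕ, ∀ n, N ≤ n → ¬ HalfRep n k := by
  refine ⟨Fbound k k + 1, fun n hn h => ?_⟩
  obtain ⟨X, Y, hX, hY, hiff⟩ := h
  have := key_lemma k k n X Y hX hY hiff
  omega
end

section
/- Suppose in a representation of G((2k+1)n) by colors (each vertex gets a set of colors, with x_p and y_q sharing a color iff p ≤ q), block G_i has a vertex x_p all of whose colors appear among the y-vertices of G_i, and block G_{i+1} has a vertex y_q all of whose colors appear among the x-vertices of G_{i+1}. Then a contradiction arises: some nonedge of G((2k+1)n) would be represented. Hence no such pair of distinguished vertices on consecutive blocks (x-side then y-side) can exist. -/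
/-- Assertion 1: In a coloring representing `G((2k+1)n)` (vertices get finite
sets of colors, `x_p` and `y_q` share a color iff `p ≤ q`), it is impossible
that block `G_i` has a distinguished vertex `x_p` (all its colors appear at
`y`-vertices of block `G_i`) and block `G_{i+1}` has a distinguished vertex
`y_q` (all its colors appear at `x`-vertices of block `G_{i+1}`).
Blocks are indexed `0,…,2k`, block `i` consisting of indices in `[i·n, (i+1)·n)`. -/
theorem no_consecutive_distinguished (n k N : ℕ) (hn : 1 ≤ n)
    (hN : N = (2 * k + 1) * n)
    (X Y : Fin N → Finset ℕ)
    (hrep : ∀ p q : Fin N, ((X p) ∩ (Y q)).Nonempty ↔ p ≤ q)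
    (i : ℕ) (hi : i + 1 < 2 * k + 1)
    (p q : Fin N)
    (hp : i * n ≤ (p : ℕ) ∧ (p : ℕ) < (i + 1) * n)
    (hq : (i + 1) * n ≤ (q : ℕ) ∧ (q : ℕ) < (i + 2) * n)
    (hpdist : ∀ c ∈ X p, ∃ s : Fin N,
      i * n ≤ (s : ℕ) ∧ (s : ℕ) < (i + 1) * n ∧ c ∈ Y s)
    (hqdist : ∀ c ∈ Y q, ∃ s : Fin N,
      (i + 1) * n ≤ (s : ℕ) ∧ (s : ℕ) < (i + 2) * n ∧ c ∈ X s) :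
    False := by
  have hpq : p ≤ q := by
    have : (p : ℕ) ≤ (q : ℕ) := le_trans (le_of_lt hp.2) hq.1
    exact_mod_cast this
  obtain ⟨c, hc⟩ := (hrep p q).mpr hpq
  rw [Finset.mem_inter] at hc
  obtain ⟨s, hs1, hs2, hcs⟩ := hpdist c hc.1
  obtain ⟨t, ht1, ht2, hct⟩ := hqdist c hc.2
  have hts : t ≤ s := by
    have := (hrep t s).mp ⟨c, Finset.mem_inter.mpr ⟨hct, hcs⟩⟩
    exact this
  have : (t : ℕ) ≤ (s : ℕ) := hts
  omega
end

section
/- In any coloring representing G((2k+1)n) (x_p and y_q share a color iff p ≤ q, at most k colors per vertex), it is impossible that k+1 consecutive blocks G_i, G_{i+1}, …, G_{i+k} each contain a distinguished vertex on the y-side, each distinguished vertex having exactly k colors. -/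
/-- Assertion 2: In any coloring representing `G((2k+1)n)` (`x_p` and `y_q`
share a color iff `p ≤ q`, at most `k` colors per vertex), it is impossible
that `k+1` consecutive blocks `G_i, …, G_{i+k}` each contain a distinguished
vertex on the `y`-side, i.e. a vertex `y_d` with exactly `k` colors all of
which also appear at `x`-vertices of the same block.
Blocks are indexed `0,…,2k`, block `j` consisting of indices in `[j·n, (j+1)·n)`. -/
theorem no_k_plus_one_y_distinguished (n k N : ℕ) (hn : 1 ≤ n)
    (hN : N = (2 * k + 1) * n)
    (X Y : Fin N → Finset ℕ)
    (hX : ∀ p, (X p).card ≤ k) (hY : ∀ q, (Y q).card ≤ k)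
    (hrep : ∀ p q : Fin N, ((X p) ∩ (Y q)).Nonempty ↔ p ≤ q)
    (i : ℕ) (hi : i + k < 2 * k + 1)
    (d : ℕ → Fin N)
    (hd : ∀ j ≤ k, (i + j) * n ≤ (d j : ℕ) ∧ (d j : ℕ) < (i + j + 1) * n)
    (hcard : ∀ j ≤ k, (Y (d j)).card = k)
    (hdist : ∀ j ≤ k, ∀ c ∈ Y (d j), ∃ s : Fin N,
      (i + j) * n ≤ (s : ℕ) ∧ (s : ℕ) < (i + j + 1) * n ∧ c ∈ X s) :
    False := by
  have hiN : i * n < N := by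
    have h1 : i * n < (i + 1) * n := by nlinarith
    have h2 : (i + 1) * n ≤ (2 * k + 1) * n := Nat.mul_le_mul_right n (by omega)
    omega
  set p : Fin N := ⟨i * n, hiN⟩ with hp
  have hple : ∀ j ≤ k, p ≤ d j := by
    intro j hj
    have h1 := (hd j hj).1
    have h2 : i * n ≤ (i + j) * n := Nat.mul_le_mul_right n (by omega)
    exact Fin.mk_le_of_le_val (le_trans h2 h1)
  have hne : ∀ j : Fin (k + 1), ((X p) ∩ (Y (d j))).Nonempty := fun j =>
    (hrep p (d j)).2 (hple j (by omega))
  choose c hc using hne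
  have hmem : ∀ j : Fin (k + 1), c j ∈ X p := fun j => (Finset.mem_inter.1 (hc j)).1
  have hmemY : ∀ j : Fin (k + 1), c j ∈ Y (d j) := fun j => (Finset.mem_inter.1 (hc j)).2
  -- the colors are pairwise distinct
  have key : ∀ a b : Fin (k + 1), (a : ℕ) < b → c a ≠ c b := by
    intro a b hab heq
    have hbk : (b : ℕ) ≤ k := by omega
    have hak : (a : ℕ) ≤ k := by omega
    obtain ⟨s, hs1, hs2, hs3⟩ := hdist b hbk (c b) (hmemY b)
    have hne2 : ((X s) ∩ (Y (d a))).Nonempty := ⟨c a, Finset.mem_inter.2 ⟨heq ▸ hs3, hmemY a⟩⟩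
    have hsled : s ≤ d (a : ℕ) := (hrep s (d a)).1 hne2
    have h1 : (d (a : ℕ) : ℕ) < (i + a + 1) * n := (hd a hak).2
    have h2 : (i + (a : ℕ) + 1) * n ≤ (i + (b : ℕ)) * n := Nat.mul_le_mul_right n (by omega)
    have := Fin.le_def.1 hsled
    omega
  have hinj : Function.Injective c := by
    intro a b hab
    by_contra h
    rcases Nat.lt_or_ge (a : ℕ) (b : ℕ) with hlt | hge
    · exact key a b hlt hab
    · have : (b : ℕ) < a := by
        rcases Nat.lt_or_ge (b : ℕ) (a : ℕ) with h1 | h1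
        · exact h1
        · exact absurd (Fin.ext (by omega)) h
      exact key b a this hab.symm
  have hcardle : k + 1 ≤ (X p).card := by
    have := Finset.card_le_card_of_injOn c (fun j _ => hmem j)
      (fun a _ b _ hab => hinj hab) (s := (Finset.univ : Finset (Fin (k + 1))))
    simpa using this
  have := hX p
  omega
end

section
/- There exist constants c₁, c₂ > 0 such that: the number Q_n of triangle-free graphs on a fixed set of 2n labeled vertices containing all subgraphs of K_{n,n} satisfies log Q_n ≥ c₁ n², while the number of monotone Boolean formulas on n variables with size at most s is at most 2^(c₂ s log n) for n ≥ 2; consequently, the proportion of n-variable monotone quadratic Boolean functions expressible by formulas of size at most c·n²/log n (for suitable c > 0) tends to 0 as n → ∞. -/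
/-- Monotone Boolean formulas over variables of type `V`. -/
inductive MFormula (V : Type) where
  | var : V → MFormula V
  | and : MFormula V → MFormula V → MFormula V
  | or  : MFormula V → MFormula V → MFormula V

namespace MFormula

/-- Evaluation of a monotone formula under an assignment. -/
def eval {V : Type} (a : V → Bool) : MFormula V → Bool
  | var v => a v
  | and f g => f.eval a && g.eval a
  | or f g => f.eval a || g.eval a

/-- Number of occurrences of the variable `v` in a formula. -/
def occ {V : Type} [DecidableEq V] (v : V) : MFormula V → ℕ
  | var w => if w = v then 1 else 0
  | and f g => f.occ v + g.occ v
  | or f g => f.occ v + g.occ v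

end MFormula

/-- The size of a formula: the number of nodes of its parse tree. -/
def MFormula.size {V : Type} : MFormula V → ℕ
  | .var _ => 1
  | .and f g => f.size + g.size + 1
  | .or f g => f.size + g.size + 1

/-- `Q n`: the number of triangle-free graphs on a fixed set of `2n`
labeled vertices (these contain all subgraphs of `K_{n,n}`). -/
noncomputable def Q (n : ℕ) : ℕ :=
  Nat.card {G : SimpleGraph (Fin n ⊕ Fin n) | G.CliqueFree 3}

namespace MFormula
variable {V : Type}

def ser : MFormula V → List (V ⊕ Bool)
  | .var v => [Sum.inl v]
  | .and f g => Sum.inr true :: (ser f ++ ser g)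
  | .or f g => Sum.inr false :: (ser f ++ ser g)

lemma length_ser (φ : MFormula V) : (ser φ).length = φ.size := by
  induction φ <;> simp [ser, size, *]

lemma one_le_size (φ : MFormula V) : 1 ≤ φ.size := by
  cases φ <;> simp [size]

lemma ser_cancel : ∀ (φ ψ : MFormula V) (l l' : List (V ⊕ Bool)),
    ser φ ++ l = ser ψ ++ l' → φ = ψ ∧ l = l' := by
  intro φ
  induction φ with
  | var v =>
    intro ψ l l' h
    cases ψ with
    | var w => simp only [ser, List.cons_append, List.nil_append, List.cons.injEq,
        Sum.inl.injEq] at h; exact ⟨by rw [h.1], h.2⟩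
    | and f g => simp [ser] at h
    | or f g => simp [ser] at h
  | and f g ihf ihg =>
    intro ψ l l' h
    cases ψ with
    | var w => simp [ser] at h
    | and f' g' =>
      simp only [ser, List.cons_append, List.cons.injEq, List.append_assoc] at h
      obtain ⟨-, h⟩ := h
      obtain ⟨rfl, h2⟩ := ihf f' _ _ h
      obtain ⟨rfl, rfl⟩ := ihg g' _ _ h2
      exact ⟨rfl, rfl⟩
    | or f' g' => simp [ser] at h
  | or f g ihf ihg =>
    intro ψ l l' h
    cases ψ with
    | var w => simp [ser] at h
    | and f' g' => simp [ser] at h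
    | or f' g' =>
      simp only [ser, List.cons_append, List.cons.injEq, List.append_assoc] at h
      obtain ⟨-, h⟩ := h
      obtain ⟨rfl, h2⟩ := ihf f' _ _ h
      obtain ⟨rfl, rfl⟩ := ihg g' _ _ h2
      exact ⟨rfl, rfl⟩

lemma ser_injective : Function.Injective (ser (V := V)) := by
  intro φ ψ h
  exact (ser_cancel φ ψ [] [] (by simp [h])).1

end MFormula

instance mformula_finite (V : Type) [Fintype V] (s : ℕ) :
    Finite {φ : MFormula V | φ.size ≤ s} := by
  classical
  apply Finite.of_injective (fun φ : {φ : MFormula V | φ.size ≤ s} =>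
      (fun i : Fin s => (MFormula.ser φ.1)[i.1]?))
  rintro ⟨φ, hφ⟩ ⟨ψ, hψ⟩ h
  simp only [Set.mem_setOf_eq] at hφ hψ
  simp only at h
  have : MFormula.ser φ = MFormula.ser ψ := by
    apply List.ext_getElem?
    intro i
    by_cases hi : i < s
    · exact congrFun h ⟨i, hi⟩
    · rw [List.getElem?_eq_none, List.getElem?_eq_none] <;>
        · rw [MFormula.length_ser]; omega
  exact Subtype.ext (MFormula.ser_injective this)

lemma mformula_card_le (V : Type) [Fintype V] (s : ℕ) :
    Nat.card {φ : MFormula V | φ.size ≤ s} ≤ (Fintype.card V + 3) ^ s := by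
  classical
  have key : Function.Injective (fun φ : {φ : MFormula V | φ.size ≤ s} =>
      (fun i : Fin s => (MFormula.ser φ.1)[i.1]?)) := by
    rintro ⟨φ, hφ⟩ ⟨ψ, hψ⟩ h
    simp only [Set.mem_setOf_eq] at hφ hψ
    simp only at h
    have : MFormula.ser φ = MFormula.ser ψ := by
      apply List.ext_getElem?
      intro i
      by_cases hi : i < s
      · exact congrFun h ⟨i, hi⟩
      · rw [List.getElem?_eq_none, List.getElem?_eq_none] <;>
          · rw [MFormula.length_ser]; omega
    exact Subtype.ext (MFormula.ser_injective this)
  calc Nat.card {φ : MFormula V | φ.size ≤ s}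
      ≤ Nat.card (Fin s → Option (V ⊕ Bool)) := Nat.card_le_card_of_injective _ key
    _ = (Fintype.card V + 3) ^ s := by
        simp [Nat.card_eq_fintype_card, Fintype.card_fun]

def bip {n : ℕ} (f : Fin n → Fin n → Bool) : SimpleGraph (Fin n ⊕ Fin n) where
  Adj x y := match x, y with
    | Sum.inl i, Sum.inr j => f i j = true
    | Sum.inr j, Sum.inl i => f i j = true
    | _, _ => False
  symm := ⟨by rintro (i|i) (j|j) h <;> exact h⟩
  loopless := ⟨by rintro (i|i) h <;> exact h⟩

lemma bip_cliqueFree {n : ℕ} (f : Fin n → Fin n → Bool) : (bip f).CliqueFree 3 := by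
  intro t ht
  obtain ⟨a, b, c, hab, hac, hbc, rfl⟩ := Finset.card_eq_three.mp ht.card_eq
  have h1 : (bip f).Adj a b := ht.isClique (by simp) (by simp) hab
  have h2 : (bip f).Adj a c := ht.isClique (by simp) (by simp) hac
  have h3 : (bip f).Adj b c := ht.isClique (by simp) (by simp) hbc
  rcases a with i|i <;> rcases b with j|j <;> rcases c with k|k <;>
    first | exact h1 | exact h2 | exact h3

lemma bip_injective {n : ℕ} : Function.Injective (bip (n := n)) := by
  intro f g h
  funext i j
  have : (bip f).Adj (Sum.inl i) (Sum.inr j) ↔ (bip g).Adj (Sum.inl i) (Sum.inr j) := by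
    rw [h]
  exact Bool.coe_iff_coe.mp this

lemma Q_lb (n : ℕ) : 2 ^ (n ^ 2) ≤ Q n := by
  have hinj : Function.Injective (fun f : Fin n → Fin n → Bool =>
      (⟨bip f, bip_cliqueFree f⟩ : {G : SimpleGraph (Fin n ⊕ Fin n) | G.CliqueFree 3})) := by
    intro f g h
    exact bip_injective (congrArg Subtype.val h)
  calc 2 ^ (n ^ 2) = Nat.card (Fin n → Fin n → Bool) := by
        simp [Nat.card_eq_fintype_card, Fintype.card_fun, pow_mul, sq]
    _ ≤ Q n := Nat.card_le_card_of_injective _ hinj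

lemma Q_pos (n : ℕ) : 0 < Q n := lt_of_lt_of_le (by positivity) (Q_lb n)

lemma adj_iff_eval {n : ℕ} (G : SimpleGraph (Fin n ⊕ Fin n)) (φ : MFormula (Fin n ⊕ Fin n))
    (h : ∀ a : Fin n ⊕ Fin n → Bool, φ.eval a = true ↔
      ∃ v w, G.Adj v w ∧ a v = true ∧ a w = true)
    (v w : Fin n ⊕ Fin n) :
    G.Adj v w ↔ φ.eval (fun u => decide (u = v ∨ u = w)) = true := by
  classical
  rw [h]
  constructor
  · intro hvw
    exact ⟨v, w, hvw, by simp, by simp⟩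
  · rintro ⟨x, y, hxy, hx, hy⟩
    simp only [decide_eq_true_eq] at hx hy
    rcases hx with rfl | rfl <;> rcases hy with rfl | rfl
    · exact absurd hxy (G.irrefl)
    · exact hxy
    · exact G.adj_symm hxy
    · exact absurd hxy (G.irrefl)

lemma npow_eq_rpow {n : ℕ} (hn : 2 ≤ n) (k : ℕ) :
    ((n : ℝ)) ^ k = (2 : ℝ) ^ ((k : ℝ) * Real.logb 2 n) := by
  have hn' : (0 : ℝ) < n := by positivity
  have h : (2 : ℝ) ^ Real.logb 2 (n : ℝ) = (n : ℝ) :=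
    Real.rpow_logb (by norm_num) (by norm_num) hn'
  calc ((n : ℝ)) ^ k = ((2 : ℝ) ^ Real.logb 2 (n : ℝ)) ^ k := by rw [h]
    _ = (2 : ℝ) ^ (Real.logb 2 (n : ℝ) * k) := by
        rw [← Real.rpow_natCast ((2 : ℝ) ^ Real.logb 2 (n : ℝ)) k,
          ← Real.rpow_mul (by norm_num)]
    _ = (2 : ℝ) ^ ((k : ℝ) * Real.logb 2 (n : ℝ)) := by rw [mul_comm]


/-- Almost all monotone quadratic Boolean functions need large formulas:
`log Q_n ≥ c₁ n²`; the number of `n`-variable monotone formulas of size at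
most `s` is at most `2^(c₂ s log n)` for `n ≥ 2`; consequently the proportion
of monotone quadratic functions (triangle-free graphs) expressible by
formulas of size at most `c·n²/log n` tends to `0`. -/
theorem almost_all_quadratic_large :
    ∃ c₁ c₂ : ℝ, 0 < c₁ ∧ 0 < c₂ ∧
      (∀ n : ℕ, c₁ * n ^ 2 ≤ Real.logb 2 (Q n)) ∧
      (∀ n s : ℕ, 2 ≤ n →
        (Nat.card {φ : MFormula (Fin n) | φ.size ≤ s} : ℝ) ≤
          2 ^ (c₂ * s * Real.logb 2 n)) ∧
      (∃ c : ℝ, 0 < c ∧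
        Filter.Tendsto
          (fun n : ℕ =>
            (Nat.card {G : SimpleGraph (Fin n ⊕ Fin n) |
              G.CliqueFree 3 ∧
              ∃ φ : MFormula (Fin n ⊕ Fin n),
                (φ.size : ℝ) ≤ c * n ^ 2 / Real.logb 2 n ∧
                ∀ a : Fin n ⊕ Fin n → Bool, φ.eval a = true ↔
                  ∃ v w, G.Adj v w ∧ a v = true ∧ a w = true} : ℝ) / Q n)
          Filter.atTop (nhds 0)) := by
  classical
  refine ⟨1, 4, one_pos, by norm_num, ?_, ?_, ?_⟩
  · -- log Q n ≥ n²
    intro n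
    have h1 : (2 : ℝ) ^ (n ^ 2 : ℕ) ≤ (Q n : ℝ) := by exact_mod_cast Q_lb n
    have h2 : Real.logb 2 ((2 : ℝ) ^ (n ^ 2 : ℕ)) ≤ Real.logb 2 (Q n) :=
      Real.logb_le_logb_of_le (by norm_num) (by positivity) h1
    calc (1 : ℝ) * (n : ℝ) ^ 2 = ((n ^ 2 : ℕ) : ℝ) * Real.logb 2 2 := by
          rw [Real.logb_self_eq_one (by norm_num)]; push_cast; ring
      _ = Real.logb 2 ((2 : ℝ) ^ (n ^ 2 : ℕ)) := by rw [Real.logb_pow]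
      _ ≤ Real.logb 2 (Q n) := h2
  · -- formula count
    intro n s hn
    have h1 : Nat.card {φ : MFormula (Fin n) | φ.size ≤ s} ≤ (n + 3) ^ s := by
      simpa using mformula_card_le (Fin n) s
    have h8 : n + 3 ≤ n ^ 4 := by
      have : 2 ^ 3 * n ≤ n ^ 3 * n := by
        exact Nat.mul_le_mul_right n (Nat.pow_le_pow_left hn 3)
      have h4 : n ^ 3 * n = n ^ 4 := by ring
      omega
    have h2 : (n + 3) ^ s ≤ (n ^ 4) ^ s := Nat.pow_le_pow_left h8 s
    have h3 : ((4 * s : ℕ) : ℝ) * Real.logb 2 n = 4 * (s : ℝ) * Real.logb 2 n := by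
      push_cast; ring
    calc (Nat.card {φ : MFormula (Fin n) | φ.size ≤ s} : ℝ)
        ≤ (((n ^ 4) ^ s : ℕ) : ℝ) := by exact_mod_cast le_trans h1 h2
      _ = ((n : ℝ)) ^ (4 * s) := by push_cast [← pow_mul]; ring
      _ = (2 : ℝ) ^ ((4 : ℝ) * s * Real.logb 2 n) := by
          rw [npow_eq_rpow hn (4 * s), h3]
  · -- the tendsto statement with c = 1/8
    refine ⟨1/8, by norm_num, ?_⟩
    apply squeeze_zero' (g := fun n : ℕ => (1/2 : ℝ) ^ n)
    · filter_upwards with n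
      positivity
    · filter_upwards [Filter.eventually_ge_atTop 2] with n hn
      have hn2 : (2 : ℝ) ≤ (n : ℝ) := by exact_mod_cast hn
      set L := Real.logb 2 (n : ℝ) with hLdef
      have hL1 : 1 ≤ L := by
        have : Real.logb 2 (2 : ℝ) ≤ Real.logb 2 (n : ℝ) :=
          Real.logb_le_logb_of_le (by norm_num) (by norm_num) hn2
        rwa [Real.logb_self_eq_one (by norm_num)] at this
      have hL0 : 0 < L := lt_of_lt_of_le one_pos hL1
      set s : ℕ := ⌊(1/8 : ℝ) * (n : ℝ) ^ 2 / L⌋₊ with hs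
      have hnum : Nat.card {G : SimpleGraph (Fin n ⊕ Fin n) |
              G.CliqueFree 3 ∧
              ∃ φ : MFormula (Fin n ⊕ Fin n),
                (φ.size : ℝ) ≤ 1/8 * (n : ℝ) ^ 2 / Real.logb 2 n ∧
                ∀ a : Fin n ⊕ Fin n → Bool, φ.eval a = true ↔
                  ∃ v w, G.Adj v w ∧ a v = true ∧ a w = true}
            ≤ (2 * n + 3) ^ s := by
        have hinj : Function.Injective
            (fun G : {G : SimpleGraph (Fin n ⊕ Fin n) |
              G.CliqueFree 3 ∧
              ∃ φ : MFormula (Fin n ⊕ Fin n),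
                (φ.size : ℝ) ≤ 1/8 * (n : ℝ) ^ 2 / Real.logb 2 n ∧
                ∀ a : Fin n ⊕ Fin n → Bool, φ.eval a = true ↔
                  ∃ v w, G.Adj v w ∧ a v = true ∧ a w = true} =>
              (⟨G.2.2.choose, by
                have hspec := G.2.2.choose_spec
                simp only [Set.mem_setOf_eq]
                exact Nat.le_floor hspec.1⟩ :
                {φ : MFormula (Fin n ⊕ Fin n) | φ.size ≤ s})) := by
          rintro ⟨G, hG⟩ ⟨H, hH⟩ h
          have hφeq : hG.2.choose = hH.2.choose := congrArg Subtype.val h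
          have hGspec := hG.2.choose_spec.2
          have hHspec := hH.2.choose_spec.2
          apply Subtype.ext
          ext v w
          rw [adj_iff_eval G _ hGspec v w, adj_iff_eval H _ hHspec v w, hφeq]
        calc Nat.card {G : SimpleGraph (Fin n ⊕ Fin n) |
              G.CliqueFree 3 ∧
              ∃ φ : MFormula (Fin n ⊕ Fin n),
                (φ.size : ℝ) ≤ 1/8 * (n : ℝ) ^ 2 / Real.logb 2 n ∧
                ∀ a : Fin n ⊕ Fin n → Bool, φ.eval a = true ↔
                  ∃ v w, G.Adj v w ∧ a v = true ∧ a w = true}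
              ≤ Nat.card {φ : MFormula (Fin n ⊕ Fin n) | φ.size ≤ s} :=
              Nat.card_le_card_of_injective _ hinj
          _ ≤ (Fintype.card (Fin n ⊕ Fin n) + 3) ^ s := mformula_card_le _ s
          _ = (2 * n + 3) ^ s := by simp [two_mul]
      have hsL : (s : ℝ) * L ≤ (1/8 : ℝ) * (n : ℝ) ^ 2 := by
        have h1 : (s : ℝ) ≤ (1/8 : ℝ) * (n : ℝ) ^ 2 / L := Nat.floor_le (by positivity)
        calc (s : ℝ) * L ≤ ((1/8 : ℝ) * (n : ℝ) ^ 2 / L) * L := by gcongr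
          _ = (1/8 : ℝ) * (n : ℝ) ^ 2 := by field_simp
      have key : ((2 * n + 3 : ℕ) : ℝ) ^ s ≤ (2 : ℝ) ^ ((3 : ℝ) * s * L) := by
        have h1 : ((2 * n + 3 : ℕ) : ℝ) ≤ (n : ℝ) ^ 3 := by push_cast; nlinarith
        have h2 : ((2 * n + 3 : ℕ) : ℝ) ^ s ≤ ((n : ℝ) ^ 3) ^ s := by
          apply pow_le_pow_left₀ (by positivity) h1
        have h3 : ((n : ℝ) ^ 3) ^ s = ((n : ℝ)) ^ (3 * s) := by rw [← pow_mul]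
        have h4 : ((n : ℝ)) ^ (3 * s) = (2 : ℝ) ^ (((3 * s : ℕ) : ℝ) * L) :=
          npow_eq_rpow hn (3 * s)
        have h5 : (((3 * s : ℕ) : ℝ)) * L = (3 : ℝ) * s * L := by push_cast; ring
        calc ((2 * n + 3 : ℕ) : ℝ) ^ s ≤ ((n : ℝ) ^ 3) ^ s := h2
          _ = (2 : ℝ) ^ ((3 : ℝ) * s * L) := by rw [h3, h4, h5]
      have hQ : (2 : ℝ) ^ (((n ^ 2 : ℕ)) : ℝ) ≤ (Q n : ℝ) := by
        rw [Real.rpow_natCast]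
        exact_mod_cast Q_lb n
      have hfrac : (Nat.card {G : SimpleGraph (Fin n ⊕ Fin n) |
              G.CliqueFree 3 ∧
              ∃ φ : MFormula (Fin n ⊕ Fin n),
                (φ.size : ℝ) ≤ 1/8 * (n : ℝ) ^ 2 / Real.logb 2 n ∧
                ∀ a : Fin n ⊕ Fin n → Bool, φ.eval a = true ↔
                  ∃ v w, G.Adj v w ∧ a v = true ∧ a w = true} : ℝ) / (Q n : ℝ)
            ≤ (2 : ℝ) ^ ((3 : ℝ) * s * L) / (2 : ℝ) ^ (((n ^ 2 : ℕ)) : ℝ) := by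
        apply div_le_div₀ (by positivity) _ (by positivity) hQ
        calc (Nat.card {G : SimpleGraph (Fin n ⊕ Fin n) |
              G.CliqueFree 3 ∧
              ∃ φ : MFormula (Fin n ⊕ Fin n),
                (φ.size : ℝ) ≤ 1/8 * (n : ℝ) ^ 2 / Real.logb 2 n ∧
                ∀ a : Fin n ⊕ Fin n → Bool, φ.eval a = true ↔
                  ∃ v w, G.Adj v w ∧ a v = true ∧ a w = true} : ℝ)
            ≤ (((2 * n + 3) ^ s : ℕ) : ℝ) := by exact_mod_cast hnum
          _ ≤ (2 : ℝ) ^ ((3 : ℝ) * s * L) := by push_cast at key ⊢; exact key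
      have hdiv : (2 : ℝ) ^ ((3 : ℝ) * s * L) / (2 : ℝ) ^ (((n ^ 2 : ℕ)) : ℝ)
          = (2 : ℝ) ^ ((3 : ℝ) * s * L - ((n ^ 2 : ℕ) : ℝ)) :=
        (Real.rpow_sub (by norm_num) _ _).symm
      have hexp : (3 : ℝ) * s * L - ((n ^ 2 : ℕ) : ℝ) ≤ -(n : ℝ) := by
        push_cast
        nlinarith [hsL, hn2, hL0, sq_nonneg ((n : ℝ) - 2)]
      have hmono : (2 : ℝ) ^ ((3 : ℝ) * s * L - ((n ^ 2 : ℕ) : ℝ)) ≤ (2 : ℝ) ^ (-(n : ℝ)) :=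
        Real.rpow_le_rpow_of_exponent_le (by norm_num) hexp
      have hfin : (2 : ℝ) ^ (-(n : ℝ)) = (1/2 : ℝ) ^ n := by
        rw [Real.rpow_neg (by norm_num), Real.rpow_natCast, one_div, inv_pow]
      calc _ ≤ (2 : ℝ) ^ ((3 : ℝ) * s * L) / (2 : ℝ) ^ (((n ^ 2 : ℕ)) : ℝ) := hfrac
        _ = (2 : ℝ) ^ ((3 : ℝ) * s * L - ((n ^ 2 : ℕ) : ℝ)) := hdiv
        _ ≤ (2 : ℝ) ^ (-(n : ℝ)) := hmono
        _ = (1/2 : ℝ) ^ n := hfin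
    · exact tendsto_pow_atTop_nhds_zero_of_lt_one (by norm_num) (by norm_num)
end

section
/- In any coloring of the vertices of G(N) by sets of colors such that x_p and y_q share a color if and only if p ≤ q, with at most k colors per vertex, every consecutive block G_i of size n contains a vertex that has exactly k colors all of which appear at vertices on the opposite side of G_i, provided r_n = k. -/
/-- If `r n = k`, then in any coloring representing `G(N)`, `N = (2k+1)n`,
with at most `k` colors per vertex, every block `G_i` (indices in
`[i·n, (i+1)·n)`, `0 ≤ i ≤ 2k`) contains a distinguished vertex: a vertex
with exactly `k` colors, all of which appear at vertices on the opposite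
side of the block. -/
theorem block_has_distinguished (n k N : ℕ) (hn : 1 ≤ n) (hr : r n = k)
    (hN : N = (2 * k + 1) * n)
    (X Y : Fin N → Finset ℕ)
    (hX : ∀ p, (X p).card ≤ k) (hY : ∀ q, (Y q).card ≤ k)
    (hrep : ∀ p q : Fin N, ((X p) ∩ (Y q)).Nonempty ↔ p ≤ q)
    (i : ℕ) (hi : i < 2 * k + 1) :
    (∃ p : Fin N, i * n ≤ (p : ℕ) ∧ (p : ℕ) < (i + 1) * n ∧
      (X p).card = k ∧
      ∀ c ∈ X p, ∃ s : Fin N, i * n ≤ (s : ℕ) ∧ (s : ℕ) < (i + 1) * n ∧ c ∈ Y s) ∨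
    (∃ q : Fin N, i * n ≤ (q : ℕ) ∧ (q : ℕ) < (i + 1) * n ∧
      (Y q).card = k ∧
      ∀ c ∈ Y q, ∃ s : Fin N, i * n ≤ (s : ℕ) ∧ (s : ℕ) < (i + 1) * n ∧ c ∈ X s) := by
  classical
  by_contra hcon
  push_neg at hcon
  obtain ⟨h1, h2⟩ := hcon
  -- k ≥ 1
  have hk1 : 1 ≤ k := by
    rcases Nat.eq_zero_or_pos k with hk | hk
    · subst hk
      have hN1 : 0 < N := by omega
      set p0 : Fin N := ⟨0, hN1⟩
      obtain ⟨c, hc⟩ := (hrep p0 p0).mpr le_rfl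
      have := hX p0
      have : X p0 = ∅ := Finset.card_eq_zero.mp (Nat.le_zero.mp this)
      rw [this] at hc
      simp at hc
    · exact hk
  -- the embedding of the block
  have hbound : ∀ j : Fin n, i * n + (j : ℕ) < N := by
    intro j
    have hj := j.2
    have : (i + 1) * n ≤ (2 * k + 1) * n := Nat.mul_le_mul_right n (by omega)
    have h1n : (i + 1) * n = i * n + n := by ring
    omega
  set e : Fin n → Fin N := fun j => ⟨i * n + (j : ℕ), hbound j⟩ with he
  have he1 : ∀ j : Fin n, i * n ≤ ((e j : ℕ)) := fun j => Nat.le_add_right _ _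
  have he2 : ∀ j : Fin n, ((e j : ℕ)) < (i + 1) * n := by
    intro j
    have hj := j.2
    have h1n : (i + 1) * n = i * n + n := by ring
    simp only [he]
    omega
  set X' : Fin n → Finset ℕ := fun j =>
    (X (e j)).filter (fun c => ∃ s : Fin N, i * n ≤ (s : ℕ) ∧ (s : ℕ) < (i + 1) * n ∧ c ∈ Y s)
    with hX'def
  set Y' : Fin n → Finset ℕ := fun j =>
    (Y (e j)).filter (fun c => ∃ s : Fin N, i * n ≤ (s : ℕ) ∧ (s : ℕ) < (i + 1) * n ∧ c ∈ X s)
    with hY'def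
  have hXc : ∀ j, (X' j).card ≤ k - 1 := by
    intro j
    by_contra hcard
    push_neg at hcard
    have hsub : X' j ⊆ X (e j) := Finset.filter_subset _ _
    have hle : (X' j).card ≤ k := le_trans (Finset.card_le_card hsub) (hX _)
    have hk2 : (X' j).card = k := by omega
    have heq : X' j = X (e j) :=
      Finset.eq_of_subset_of_card_le hsub (by rw [hk2]; exact hX _)
    have hcardX : (X (e j)).card = k := by rw [← heq, hk2]
    obtain ⟨c, hc, hcs⟩ := h1 (e j) (he1 j) (he2 j) hcardX
    have : c ∈ X' j := heq ▸ hc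
    rw [hX'def] at this
    simp only [Finset.mem_filter] at this
    obtain ⟨_, s, hs1, hs2, hs3⟩ := this
    exact hcs s hs1 hs2 hs3
  have hYc : ∀ j, (Y' j).card ≤ k - 1 := by
    intro j
    by_contra hcard
    push_neg at hcard
    have hsub : Y' j ⊆ Y (e j) := Finset.filter_subset _ _
    have hle : (Y' j).card ≤ k := le_trans (Finset.card_le_card hsub) (hY _)
    have hk2 : (Y' j).card = k := by omega
    have heq : Y' j = Y (e j) :=
      Finset.eq_of_subset_of_card_le hsub (by rw [hk2]; exact hY _)
    have hcardY : (Y (e j)).card = k := by rw [← heq, hk2]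
    obtain ⟨c, hc, hcs⟩ := h2 (e j) (he1 j) (he2 j) hcardY
    have : c ∈ Y' j := heq ▸ hc
    rw [hY'def] at this
    simp only [Finset.mem_filter] at this
    obtain ⟨_, s, hs1, hs2, hs3⟩ := this
    exact hcs s hs1 hs2 hs3
  have hrep' : ∀ j j' : Fin n, (X' j ∩ Y' j').Nonempty ↔ j ≤ j' := by
    intro j j'
    constructor
    · rintro ⟨c, hc⟩
      rw [Finset.mem_inter, hX'def, hY'def] at hc
      simp only [Finset.mem_filter] at hc
      have : e j ≤ e j' := (hrep _ _).mp ⟨c, Finset.mem_inter.mpr ⟨hc.1.1, hc.2.1⟩⟩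
      rw [Fin.le_def] at this
      simp only [he] at this
      rw [Fin.le_def]
      omega
    · intro hle
      have : e j ≤ e j' := by
        rw [Fin.le_def]
        simp only [he]
        have := Fin.le_def.mp hle
        omega
      obtain ⟨c, hc⟩ := (hrep (e j) (e j')).mpr this
      rw [Finset.mem_inter] at hc
      refine ⟨c, ?_⟩
      rw [Finset.mem_inter, hX'def, hY'def]
      simp only [Finset.mem_filter]
      exact ⟨⟨hc.1, e j', he1 j', he2 j', hc.2⟩, ⟨hc.2, e j, he1 j, he2 j, hc.1⟩⟩
  have hhalf : HalfRep n (k - 1) := ⟨X', Y', hXc, hYc, hrep'⟩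
  have : r n ≤ k - 1 := Nat.sInf_le hhalf
  omega
end
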